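/- Let G : ℕ → ℂ satisfy G(i+2) = G(i+1) + G(i) for all i ≥ 0, let n and k be nonnegative integers, and let w ∈ ℂ be such that Δ := ∑_{s=0}^{n+1} fib-binom(n+1, s) · (−1)^{⌈(n−s+1)/2⌉} · w^{n−s+1} ≠ 0. Then ∑_{j=0}^{k} w^j · G(j)^n = ( ∑_{s=0}^{n+1} fib-binom(n+1, s)·(−1)^{⌈(n−s+1)/2⌉} · ∑_{j=0}^{s−1} w^{j+n−s+1}·G(j)^n − ∑_{s=0}^{n+1} fib-binom(n+1, s)·(−1)^{⌈(n−s+1)/2⌉} · ∑_{j=k+1}^{k+s} w^{j+n−s+1}·G(j)^n ) / Δ. -/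

import Mathlib

open Finset Real goldenRatio

/-- The Fibonomial coefficient `fib-binom(p, q) = ∏_{j=1}^{q} F(p-q+j) / F(j)`. -/
noncomputable def fibBinom (p q : ℕ) : ℂ :=
  ∏ j ∈ Finset.Icc 1 q, (Nat.fib (p - q + j) : ℂ) / (Nat.fib j : ℂ)

noncomputable def fibNum (p s : ℕ) : ℂ := ∏ i ∈ Finset.range s, (Nat.fib (p - s + 1 + i) : ℂ)
noncomputable def fibDen (s : ℕ) : ℂ := ∏ i ∈ Finset.range s, (Nat.fib (1 + i) : ℂ)

lemma fib_cast_ne_zero {m : ℕ} (h : 1 ≤ m) : (Nat.fib m : ℂ) ≠ 0 :=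
  Nat.cast_ne_zero.mpr (Nat.fib_pos.mpr (by omega)).ne' 

lemma fibNum_ne_zero (p s : ℕ) : fibNum p s ≠ 0 :=
  Finset.prod_ne_zero_iff.mpr fun i _ => fib_cast_ne_zero (by omega)

lemma fibDen_ne_zero (s : ℕ) : fibDen s ≠ 0 :=
  Finset.prod_ne_zero_iff.mpr fun i _ => fib_cast_ne_zero (by omega)

lemma fibBinom_eq (p s : ℕ) : fibBinom p s = fibNum p s / fibDen s := by
  rw [fibBinom, ← Finset.Ico_add_one_right_eq_Icc, Finset.prod_Ico_eq_prod_range, fibNum, fibDen,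
    Finset.prod_div_distrib]
  congr 1
  exact Finset.prod_congr rfl fun i _ => by rw [show p - s + (1 + i) = p - s + 1 + i by omega]

lemma fibBinom_ne_zero (p s : ℕ) : fibBinom p s ≠ 0 := by
  rw [fibBinom_eq]
  exact div_ne_zero (fibNum_ne_zero p s) (fibDen_ne_zero s)

lemma fibDen_succ (s : ℕ) : fibDen (s + 1) = fibDen s * (Nat.fib (s + 1) : ℂ) := by
  rw [fibDen, fibDen, Finset.prod_range_succ, add_comm 1 s]

lemma fibNum_succ (p s : ℕ) (h : s ≤ p) :
    fibNum (p + 1) (s + 1) = fibNum p s * (Nat.fib (p + 1) : ℂ) := by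
  rw [fibNum, fibNum, Finset.prod_range_succ, Nat.succ_sub_succ,
    show p - s + 1 + s = p + 1 by omega]

lemma fibNum_succ' (p s : ℕ) (h : s ≤ p) :
    fibNum (p + 1) s * (Nat.fib (p + 1 - s) : ℂ) = fibNum p s * (Nat.fib (p + 1) : ℂ) := by
  have h1 : ∏ i ∈ Finset.range (s + 1), (Nat.fib (p + 1 - s + i) : ℂ) =
      fibNum p s * (Nat.fib (p + 1) : ℂ) := by
    rw [Finset.prod_range_succ, fibNum, show p + 1 - s + s = p + 1 by omega]
    congr 1
    exact Finset.prod_congr rfl fun i _ => by rw [show p + 1 - s + i = p - s + 1 + i by omega]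
  have h2 : ∏ i ∈ Finset.range (s + 1), (Nat.fib (p + 1 - s + i) : ℂ) =
      fibNum (p + 1) s * (Nat.fib (p + 1 - s) : ℂ) := by
    rw [Finset.prod_range_succ', fibNum, add_zero]
    congr 1
    exact Finset.prod_congr rfl fun i _ => by rw [show p + 1 - s + (i + 1) = p + 1 - s + 1 + i by omega]
  rw [← h2, h1]

lemma fibBinom_self (p : ℕ) : fibBinom p p = 1 := by
  rw [fibBinom_eq, fibNum, Nat.sub_self]
  exact div_self (fibDen_ne_zero p)

open Finset Real goldenRatio

noncomputable def ga : ℂ := ((goldenRatio : ℝ) : ℂ)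
noncomputable def gb : ℂ := ((goldenConj : ℝ) : ℂ)

lemma ga_mul_gb : ga * gb = -1 := by
  rw [ga, gb, ← Complex.ofReal_mul, goldenRatio_mul_goldenConj]; norm_num

lemma gb_ne_zero : gb ≠ 0 := by
  rw [gb]; exact_mod_cast Complex.ofReal_ne_zero.mpr goldenConj_ne_zero

lemma ga_ne_zero : ga ≠ 0 := by
  rw [ga]; exact_mod_cast Complex.ofReal_ne_zero.mpr goldenRatio_ne_zero

lemma ga_sub_gb_ne_zero : ga - gb ≠ 0 := by
  rw [ga, gb, ← Complex.ofReal_sub, Complex.ofReal_ne_zero, goldenRatio_sub_goldenConj]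
  positivity

lemma fibC (m : ℕ) : (Nat.fib m : ℂ) = (ga ^ m - gb ^ m) / (ga - gb) := by
  rw [ga, gb, ← Complex.ofReal_pow, ← Complex.ofReal_pow, ← Complex.ofReal_sub,
    ← Complex.ofReal_sub, ← Complex.ofReal_div]
  norm_cast
  rw [Real.coe_fib_eq, goldenRatio_sub_goldenConj]

lemma fibC' (m : ℕ) : (Nat.fib m : ℂ) * (ga - gb) = ga ^ m - gb ^ m := by
  rw [fibC, div_mul_cancel₀ _ ga_sub_gb_ne_zero]

lemma neg_pow_congr (a b : ℕ) (h : a % 2 = b % 2) : (-1 : ℂ) ^ a = (-1 : ℂ) ^ b := by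
  conv_lhs => rw [← Nat.div_add_mod a 2]
  conv_rhs => rw [← Nat.div_add_mod b 2]
  rw [pow_add, pow_add, pow_mul, pow_mul, h]
  norm_num

set_option maxRecDepth 8000 in
lemma core_id (A B e : ℂ) (hA : A ≠ 0) (hAB : A * B = -1) (τ d : ℕ) :
    (-(-1 : ℂ) ^ τ * e) * (A ^ (τ + d + 2) - B ^ (τ + d + 2)) =
      B ^ (τ + 1) * (-(-1 : ℂ) ^ τ * e) * (A ^ (d + 1) - B ^ (d + 1)) -
        A ^ (τ + d + 1) * B ^ τ * e * (A ^ (τ + 1) - B ^ (τ + 1)) := by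
  have hB : B = (-1 : ℂ) * A⁻¹ := by field_simp; linear_combination hAB
  subst hB
  have hAτ : A ^ τ ≠ 0 := pow_ne_zero _ hA
  have hAd : A ^ d ≠ 0 := pow_ne_zero _ hA
  simp only [mul_pow, inv_pow, pow_add]
  rcases Nat.even_or_odd τ with hτ | hτ <;> rcases Nat.even_or_odd d with hd | hd <;>
    simp only [hτ.neg_one_pow, hd.neg_one_pow] <;> field_simp <;> ring

lemma fib_core (s τ : ℕ) (e : ℂ) :
    (-(-1 : ℂ) ^ τ * e) * (Nat.fib (s + τ + 2) : ℂ) =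
      (-(-1 : ℂ) ^ τ * e) * gb ^ (τ + 1) * (Nat.fib (s + 1) : ℂ) -
        ga ^ (s + τ + 1) * e * gb ^ τ * (Nat.fib (τ + 1) : ℂ) := by
  have h := core_id ga gb e ga_ne_zero ga_mul_gb τ s
  refine mul_right_cancel₀ ga_sub_gb_ne_zero ?_
  linear_combination (-(-1 : ℂ) ^ τ * e) * fibC' (s + τ + 2) -
    (-(-1 : ℂ) ^ τ * e) * gb ^ (τ + 1) * fibC' (s + 1) +
    ga ^ (s + τ + 1) * e * gb ^ τ * fibC' (τ + 1) + h

noncomputable def cc (n s : ℕ) : ℂ := fibBinom (n + 1) s * (-1 : ℂ) ^ ((n + 1 - s + 1) / 2)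

lemma sign_rec (τ : ℕ) : (-1 : ℂ) ^ ((τ + 2) / 2) = -(-1 : ℂ) ^ τ * (-1 : ℂ) ^ ((τ + 1) / 2) := by
  rcases Nat.even_or_odd τ with ⟨m, rfl⟩ | ⟨m, rfl⟩
  · rw [show (m + m + 2) / 2 = m + 1 by omega, show (m + m + 1) / 2 = m by omega,
      Even.neg_one_pow ⟨m, rfl⟩, pow_succ]
    ring
  · rw [show 2 * m + 1 + 2 = 2 * (m + 1) + 1 by ring, show (2 * (m + 1) + 1) / 2 = m + 1 by omega,
      show (2 * m + 1 + 1) / 2 = m + 1 by omega, Odd.neg_one_pow ⟨m, rfl⟩]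
    ring

lemma cc_rec (n s : ℕ) (h : s ≤ n) :
    cc (n + 1) (s + 1) = cc n s * gb ^ (n + 1 - s) - ga ^ (n + 1) * cc n (s + 1) * gb ^ (n - s) := by
  obtain ⟨τ, rfl⟩ : ∃ τ, n = s + τ := ⟨n - s, by omega⟩
  rw [show s + τ + 1 - s = τ + 1 by omega, show s + τ - s = τ by omega]
  rw [cc, cc, cc,
    show s + τ + 1 + 1 - (s + 1) + 1 = τ + 2 by omega,
    show s + τ + 1 - s + 1 = τ + 2 by omega,
    show s + τ + 1 - (s + 1) + 1 = τ + 1 by omega,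
    show s + τ + 1 + 1 = s + τ + 2 by ring]
  set e := (-1 : ℂ) ^ ((τ + 1) / 2) with he
  rw [sign_rec]
  have hFT : (Nat.fib (s + τ + 2) : ℂ) ≠ 0 := fib_cast_ne_zero (by omega)
  have hF1 : (Nat.fib (s + 1) : ℂ) ≠ 0 := fib_cast_ne_zero (by omega)
  have hA := fibNum_succ (s + τ + 1) s (by omega)
  have hB := fibNum_succ' (s + τ + 1) (s + 1) (by omega)
  rw [show s + τ + 1 + 1 = s + τ + 2 by ring] at hA hB
  rw [show s + τ + 2 - (s + 1) = τ + 1 by omega] at hB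
  have hN1 : fibNum (s + τ + 1) s = fibNum (s + τ + 2) (s + 1) / (Nat.fib (s + τ + 2) : ℂ) := by
    rw [hA]; field_simp
  have hN2 : fibNum (s + τ + 1) (s + 1) =
      fibNum (s + τ + 2) (s + 1) * (Nat.fib (τ + 1) : ℂ) / (Nat.fib (s + τ + 2) : ℂ) := by
    rw [eq_div_iff hFT, hB]
  have hcore := fib_core s τ e
  rw [fibBinom_eq, fibBinom_eq, fibBinom_eq, fibDen_succ, hN1, hN2]
  have hD := fibDen_ne_zero s
  field_simp
  linear_combination (fibNum (s + τ + 2) (s + 1)) * hcore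

lemma fibBinom_zero (p : ℕ) : fibBinom p 0 = 1 := by
  simp [fibBinom]

lemma cc_self (m : ℕ) : cc m (m + 1) = 1 := by
  rw [cc, fibBinom_self, show m + 1 - (m + 1) + 1 = 1 by omega]
  norm_num

lemma cc_zero_rec (n : ℕ) : cc (n + 1) 0 = -ga ^ (n + 1) * gb ^ (n + 1) * cc n 0 := by
  rw [cc, cc, fibBinom_zero, fibBinom_zero, one_mul, one_mul,
    show n + 1 + 1 - 0 + 1 = n + 3 by omega, show n + 1 - 0 + 1 = n + 2 by omega]
  have h : -ga ^ (n + 1) * gb ^ (n + 1) = (-1 : ℂ) ^ (n + 2) := by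
    rw [neg_mul, ← mul_pow, ga_mul_gb, pow_succ]
    ring
  rw [h, ← pow_add]
  rcases Nat.even_or_odd n with ⟨m, rfl⟩ | ⟨m, rfl⟩
  · rw [show (m + m + 3) / 2 = m + 1 by omega, show m + m + 2 + (m + m + 2) / 2 = 3 * m + 3 by omega]
    exact neg_pow_congr _ _ (by omega)
  · rw [show (2 * m + 1 + 3) / 2 = m + 2 by omega,
      show 2 * m + 1 + 2 + (2 * m + 1 + 2) / 2 = 3 * m + 4 by omega]
    exact neg_pow_congr _ _ (by omega)

lemma P_prod (n : ℕ) (x : ℂ) :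
    ∑ s ∈ Finset.range (n + 2), cc n s * x ^ s =
      ∏ i ∈ Finset.range (n + 1), (x - ga ^ i * gb ^ (n - i)) := by
  induction n generalizing x with
  | zero =>
    rw [Finset.sum_range_succ, Finset.sum_range_succ, Finset.sum_range_zero,
      Finset.prod_range_succ, Finset.prod_range_zero]
    rw [cc, cc, fibBinom_zero, fibBinom_self]
    norm_num
    ring
  | succ n ih =>
    have h1 : ∏ i ∈ Finset.range (n + 2), (x - ga ^ i * gb ^ (n + 1 - i)) =
        (x - ga ^ (n + 1)) * ∏ i ∈ Finset.range (n + 1), (x - ga ^ i * gb ^ (n + 1 - i)) := by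
      rw [Finset.prod_range_succ, Nat.sub_self, pow_zero, mul_one, mul_comm]
    have h2 : ∀ i ∈ Finset.range (n + 1), x - ga ^ i * gb ^ (n + 1 - i) =
        gb * (x / gb - ga ^ i * gb ^ (n - i)) := by
      intro i hi
      simp only [Finset.mem_range] at hi
      rw [mul_sub, mul_div_cancel₀ _ gb_ne_zero, show n + 1 - i = n - i + 1 by omega, pow_succ]
      ring
    have h3 : gb ^ (n + 1) * ∑ s ∈ Finset.range (n + 2), cc n s * (x / gb) ^ s =
        ∑ s ∈ Finset.range (n + 2), cc n s * gb ^ (n + 1 - s) * x ^ s := by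
      rw [Finset.mul_sum]
      refine Finset.sum_congr rfl fun s hs => ?_
      simp only [Finset.mem_range] at hs
      have hgb : gb ^ (n + 1) = gb ^ (n + 1 - s) * gb ^ s := by
        rw [← pow_add]; congr 1; omega
      calc gb ^ (n + 1) * (cc n s * (x / gb) ^ s)
          = cc n s * gb ^ (n + 1 - s) * (gb ^ s * (x / gb) ^ s) := by rw [hgb]; ring
        _ = cc n s * gb ^ (n + 1 - s) * x ^ s := by
            rw [← mul_pow, mul_div_cancel₀ _ gb_ne_zero]
    rw [h1, Finset.prod_congr rfl h2, Finset.prod_mul_distrib, Finset.prod_const,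
      Finset.card_range, ← ih, h3]
    have expand : (x - ga ^ (n + 1)) * ∑ s ∈ Finset.range (n + 2), cc n s * gb ^ (n + 1 - s) * x ^ s =
        (∑ s ∈ Finset.range (n + 2), cc n s * gb ^ (n + 1 - s) * x ^ (s + 1)) -
          ∑ s ∈ Finset.range (n + 2), ga ^ (n + 1) * (cc n s * gb ^ (n + 1 - s) * x ^ s) := by
      rw [sub_mul, Finset.mul_sum, Finset.mul_sum]
      congr 1
      exact Finset.sum_congr rfl fun s _ => by ring
    rw [expand, Finset.sum_range_succ (fun s => cc n s * gb ^ (n + 1 - s) * x ^ (s + 1)),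
      Finset.sum_range_succ' (fun s => ga ^ (n + 1) * (cc n s * gb ^ (n + 1 - s) * x ^ s))]
    rw [Finset.sum_range_succ' (fun s => cc (n + 1) s * x ^ s),
      Finset.sum_range_succ (fun s => cc (n + 1) (s + 1) * x ^ (s + 1))]
    simp only [Nat.succ_sub_succ, Nat.sub_self, pow_zero, Nat.sub_zero]
    have hmid : ∑ s ∈ Finset.range (n + 1), cc (n + 1) (s + 1) * x ^ (s + 1) =
        (∑ s ∈ Finset.range (n + 1), cc n s * gb ^ (n + 1 - s) * x ^ (s + 1)) -
          ∑ s ∈ Finset.range (n + 1), ga ^ (n + 1) * (cc n (s + 1) * gb ^ (n - s) * x ^ (s + 1)) := by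
      rw [← Finset.sum_sub_distrib]
      refine Finset.sum_congr rfl fun s hs => ?_
      simp only [Finset.mem_range] at hs
      rw [cc_rec n s (by omega)]
      ring
    rw [hmid, cc_zero_rec, show n + 1 + 1 = (n + 1) + 1 by rfl, cc_self (n + 1), cc_self n]
    ring

lemma ga_sq : ga ^ 2 = ga + 1 := by
  rw [ga, ← Complex.ofReal_pow, goldenRatio_sq]
  push_cast
  ring

lemma gb_sq : gb ^ 2 = gb + 1 := by
  rw [gb, ← Complex.ofReal_pow, goldenConj_sq]
  push_cast
  ring

lemma G_binet (G : ℕ → ℂ) (hG : ∀ i, G (i + 2) = G (i + 1) + G i) :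
    ∃ A B : ℂ, ∀ i, G i = A * ga ^ i + B * gb ^ i := by
  refine ⟨(G 1 - G 0 * gb) / (ga - gb), (G 0 * ga - G 1) / (ga - gb), ?_⟩
  have hr := ga_sub_gb_ne_zero
  have key : ∀ i, G i = (G 1 - G 0 * gb) / (ga - gb) * ga ^ i +
      (G 0 * ga - G 1) / (ga - gb) * gb ^ i ∧
      G (i + 1) = (G 1 - G 0 * gb) / (ga - gb) * ga ^ (i + 1) +
      (G 0 * ga - G 1) / (ga - gb) * gb ^ (i + 1) := by
    intro i
    induction i with
    | zero =>
      constructor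
      · field_simp
        ring
      · field_simp
        ring
    | succ i ih =>
      obtain ⟨h1, h2⟩ := ih
      refine ⟨h2, ?_⟩
      rw [hG i, h1, h2]
      have e1 : ga ^ (i + 2) = ga ^ i * (ga + 1) := by
        rw [← ga_sq, ← pow_add]
      have e2 : gb ^ (i + 2) = gb ^ i * (gb + 1) := by
        rw [← gb_sq, ← pow_add]
      rw [e1, e2, pow_succ]
      ring
  exact fun i => (key i).1

lemma key_rec (G : ℕ → ℂ) (hG : ∀ i, G (i + 2) = G (i + 1) + G i) (n m : ℕ) :
    ∑ s ∈ Finset.range (n + 2), cc n s * G (m + s) ^ n = 0 := by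
  obtain ⟨A, B, hAB⟩ := G_binet G hG
  have claim1 : ∀ s ∈ Finset.range (n + 2), cc n s * G (m + s) ^ n =
      ∑ i ∈ Finset.range (n + 1),
        A ^ i * B ^ (n - i) * (Nat.choose n i : ℂ) * ga ^ (m * i) * gb ^ (m * (n - i)) *
          (cc n s * (ga ^ i * gb ^ (n - i)) ^ s) := by
    intro s _
    rw [hAB (m + s), add_pow, Finset.mul_sum]
    refine Finset.sum_congr rfl fun i _ => ?_
    simp only [mul_pow, ← pow_mul]
    ring
  rw [Finset.sum_congr rfl claim1, Finset.sum_comm]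
  refine Finset.sum_eq_zero fun i hi => ?_
  rw [← Finset.mul_sum, P_prod n (ga ^ i * gb ^ (n - i))]
  exact mul_eq_zero_of_right _ (Finset.prod_eq_zero hi (sub_self _))

lemma cc_def (n s : ℕ) :
    fibBinom (n + 1) s * (-1 : ℂ) ^ ((n + 1 - s + 1) / 2) = cc n s := rfl

theorem sum_w_pow_G_pow (G : ℕ → ℂ) (hG : ∀ i, G (i + 2) = G (i + 1) + G i)
    (n k : ℕ) (w : ℂ)
    (hΔ : ∑ s ∈ Finset.range (n + 2),
      fibBinom (n + 1) s * (-1 : ℂ) ^ ((n + 1 - s + 1) / 2) * w ^ (n + 1 - s) ≠ 0) :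
    ∑ j ∈ Finset.range (k + 1), w ^ j * G j ^ n =
      ((∑ s ∈ Finset.range (n + 2), fibBinom (n + 1) s * (-1 : ℂ) ^ ((n + 1 - s + 1) / 2) *
          ∑ j ∈ Finset.range s, w ^ (j + (n + 1 - s)) * G j ^ n)
        - ∑ s ∈ Finset.range (n + 2), fibBinom (n + 1) s * (-1 : ℂ) ^ ((n + 1 - s + 1) / 2) *
          ∑ j ∈ Finset.Icc (k + 1) (k + s), w ^ (j + (n + 1 - s)) * G j ^ n) /
      (∑ s ∈ Finset.range (n + 2),
        fibBinom (n + 1) s * (-1 : ℂ) ^ ((n + 1 - s + 1) / 2) * w ^ (n + 1 - s)) := by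
  rw [eq_div_iff hΔ]
  simp only [cc_def] at *
  have hL : (∑ j ∈ Finset.range (k + 1), w ^ j * G j ^ n) *
      (∑ s ∈ Finset.range (n + 2), cc n s * w ^ (n + 1 - s)) =
      ∑ s ∈ Finset.range (n + 2), cc n s *
        ∑ j ∈ Finset.range (k + 1), w ^ (j + (n + 1 - s)) * G j ^ n := by
    rw [Finset.mul_sum]
    refine Finset.sum_congr rfl fun s hs => ?_
    rw [Finset.sum_mul, Finset.mul_sum]
    refine Finset.sum_congr rfl fun j hj => ?_
    rw [pow_add]
    ring
  have per_s : ∀ s ∈ Finset.range (n + 2),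
      cc n s * (∑ j ∈ Finset.range s, w ^ (j + (n + 1 - s)) * G j ^ n) -
        cc n s * (∑ j ∈ Finset.Icc (k + 1) (k + s), w ^ (j + (n + 1 - s)) * G j ^ n) -
        cc n s * (∑ j ∈ Finset.range (k + 1), w ^ (j + (n + 1 - s)) * G j ^ n) =
      -(cc n s * ∑ i ∈ Finset.range (k + 1), w ^ (i + n + 1) * G (s + i) ^ n) := by
    intro s hs
    simp only [Finset.mem_range] at hs
    have e3 : ∑ j ∈ Finset.range (s + (k + 1)), w ^ (j + (n + 1 - s)) * G j ^ n =
        (∑ j ∈ Finset.range s, w ^ (j + (n + 1 - s)) * G j ^ n) +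
          ∑ i ∈ Finset.range (k + 1), w ^ (i + n + 1) * G (s + i) ^ n := by
      rw [Finset.sum_range_add]
      congr 1
      exact Finset.sum_congr rfl fun i _ => by
        rw [show s + i + (n + 1 - s) = i + n + 1 by omega]
    have e2 : ∑ j ∈ Finset.range (s + (k + 1)), w ^ (j + (n + 1 - s)) * G j ^ n =
        (∑ j ∈ Finset.range (k + 1), w ^ (j + (n + 1 - s)) * G j ^ n) +
          ∑ j ∈ Finset.Icc (k + 1) (k + s), w ^ (j + (n + 1 - s)) * G j ^ n := by
      rw [show s + (k + 1) = k + 1 + s by ring, Finset.sum_range_add]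
      congr 1
      rw [← Finset.Ico_add_one_right_eq_Icc, Finset.sum_Ico_eq_sum_range,
        show k + s + 1 - (k + 1) = s by omega]
    linear_combination cc n s * e2 - cc n s * e3
  calc (∑ j ∈ Finset.range (k + 1), w ^ j * G j ^ n) *
      (∑ s ∈ Finset.range (n + 2), cc n s * w ^ (n + 1 - s))
      = (∑ s ∈ Finset.range (n + 2), cc n s *
          ∑ j ∈ Finset.range s, w ^ (j + (n + 1 - s)) * G j ^ n)
        - (∑ s ∈ Finset.range (n + 2), cc n s *
          ∑ j ∈ Finset.Icc (k + 1) (k + s), w ^ (j + (n + 1 - s)) * G j ^ n)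
        - ((∑ s ∈ Finset.range (n + 2), cc n s *
          ∑ j ∈ Finset.range s, w ^ (j + (n + 1 - s)) * G j ^ n)
        - (∑ s ∈ Finset.range (n + 2), cc n s *
          ∑ j ∈ Finset.Icc (k + 1) (k + s), w ^ (j + (n + 1 - s)) * G j ^ n)
        - (∑ j ∈ Finset.range (k + 1), w ^ j * G j ^ n) *
          (∑ s ∈ Finset.range (n + 2), cc n s * w ^ (n + 1 - s))) := by ring
    _ = (∑ s ∈ Finset.range (n + 2), cc n s *
          ∑ j ∈ Finset.range s, w ^ (j + (n + 1 - s)) * G j ^ n)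
        - ∑ s ∈ Finset.range (n + 2), cc n s *
          ∑ j ∈ Finset.Icc (k + 1) (k + s), w ^ (j + (n + 1 - s)) * G j ^ n := by
        rw [sub_eq_self]  -- reduce to showing the big parenthesized difference is 0
        rw [hL, ← Finset.sum_sub_distrib, ← Finset.sum_sub_distrib,
          Finset.sum_congr rfl per_s]
        rw [Finset.sum_neg_distrib, neg_eq_zero]
        have expand : ∀ s ∈ Finset.range (n + 2),
            cc n s * ∑ i ∈ Finset.range (k + 1), w ^ (i + n + 1) * G (s + i) ^ n =
            ∑ i ∈ Finset.range (k + 1), cc n s * (w ^ (i + n + 1) * G (s + i) ^ n) :=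
          fun s _ => Finset.mul_sum _ _ _
        rw [Finset.sum_congr rfl expand, Finset.sum_comm]
        refine Finset.sum_eq_zero fun i hi => ?_
        have h := key_rec G hG n i
        calc ∑ s ∈ Finset.range (n + 2), cc n s * (w ^ (i + n + 1) * G (s + i) ^ n)
            = w ^ (i + n + 1) * ∑ s ∈ Finset.range (n + 2), cc n s * G (i + s) ^ n := by
              rw [Finset.mul_sum]
              exact Finset.sum_congr rfl fun s _ => by rw [add_comm s i]; ring
          _ = 0 := by rw [h, mul_zero]
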